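/- A 1-permutation σ (that is, an ordinary permutation of {1,…,n} written as a word) is fully 1-rooted cuttable if and only if it avoids the pattern 231; that is, if and only if there exist no positions p < q < r with σ(r) < σ(p) < σ(q). -/

import Mathlib

/-- `σ` is a `k`-permutation of degree `n`: a word over the alphabet `{1, …, n}`
in which every value `i ∈ {1, …, n}` occurs exactly `k` times (and no other
letter occurs). -/
def IsMultiPerm (k n : ℕ) (σ : List ℕ) : Prop :=
  ∀ i : ℕ, σ.count i = if 1 ≤ i ∧ i ≤ n then k else 0

/-- The restriction `σ^{|L}` of a multipermutation `σ` to a set `L` of values: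
delete all letters whose value is not in `L`, and replace, for each `x`, the
`x`-th smallest element of `L` by `x`. -/
def restrict (σ : List ℕ) (L : Finset ℕ) : List ℕ :=
  (σ.filter fun x => decide (x ∈ L)).map fun x => (L.filter fun y => y ≤ x).card

/-- `γ` is a `k`-rooted cut of the `k`-permutation `σ` of degree `n`:
`1 ≤ γ ≤ n - 1` and `σ = μ·ν·ω` where `μ` consists of the first `k` letters of
`σ` and `ν`, `ω` are words such that every letter of `ν` is at most `γ` and
every letter of `ω` is greater than `γ`. -/
def IsKRootedCut (k n : ℕ) (σ : List ℕ) (γ : ℕ) : Prop :=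
  1 ≤ γ ∧ γ ≤ n - 1 ∧
    ∃ μ ν ω : List ℕ,
      σ = μ ++ ν ++ ω ∧ μ.length = k ∧ (∀ x ∈ ν, x ≤ γ) ∧ (∀ x ∈ ω, γ < x)

/-- A `k`-permutation of degree `n` is `k`-rooted cuttable if it has a
`k`-rooted cut. -/
def KRootedCuttable (k n : ℕ) (σ : List ℕ) : Prop :=
  ∃ γ, IsKRootedCut k n σ γ

/-- A `k`-permutation of degree `n` is fully `k`-rooted cuttable if its
restriction to every interval `{a, …, b} ⊆ {1, …, n}` with `a < b` is
`k`-rooted cuttable. -/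
def FullyKRootedCuttable (k n : ℕ) (σ : List ℕ) : Prop :=
  ∀ a b : ℕ, 1 ≤ a → a < b → b ≤ n →
    KRootedCuttable k (Finset.Icc a b).card (restrict σ (Finset.Icc a b))

/-- Structural form of containing a 231 pattern. -/
def Pat231 (l : List ℕ) : Prop :=
  ∃ (A B C D : List ℕ) (x y z : ℕ), l = A ++ x :: B ++ y :: C ++ z :: D ∧ z < x ∧ x < y

lemma getmid {E T : List ℕ} {x : ℕ} {i : ℕ} (hi : i = E.length)
    (h : i < (E ++ x :: T).length) : (E ++ x :: T)[i] = x := by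
  subst hi
  rw [List.getElem_append_right le_rfl]
  simp

lemma pat_to_idx {l : List ℕ} (h : Pat231 l) :
    ∃ p q r : Fin l.length, p < q ∧ q < r ∧ l.get r < l.get p ∧ l.get p < l.get q := by
  obtain ⟨A, B, C, D, x, y, z, rfl, h1, h2⟩ := h
  have hlen : (A ++ x :: B ++ y :: C ++ z :: D).length
      = A.length + B.length + C.length + D.length + 3 := by
    simp; omega
  have gx : (A ++ x :: B ++ y :: C ++ z :: D)[A.length]'(by omega) = x := by
    rw [List.getElem_of_eq
      (show A ++ x :: B ++ y :: C ++ z :: D = A ++ x :: (B ++ y :: C ++ z :: D) by simp)]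
    exact getmid rfl _
  have gy : (A ++ x :: B ++ y :: C ++ z :: D)[A.length + B.length + 1]'(by omega) = y := by
    rw [List.getElem_of_eq
      (show A ++ x :: B ++ y :: C ++ z :: D = (A ++ x :: B) ++ y :: (C ++ z :: D) by simp)]
    exact getmid (by simp; omega) _
  have gz : (A ++ x :: B ++ y :: C ++ z :: D)[A.length + B.length + C.length + 2]'(by omega)
      = z := by
    rw [List.getElem_of_eq
      (show A ++ x :: B ++ y :: C ++ z :: D = (A ++ x :: B ++ y :: C) ++ z :: D by simp)]
    exact getmid (by simp; omega) _
  refine ⟨⟨A.length, by omega⟩, ⟨A.length + B.length + 1, by omega⟩,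
    ⟨A.length + B.length + C.length + 2, by omega⟩, ?_, ?_, ?_, ?_⟩
  · simp only [Fin.mk_lt_mk]; omega
  · simp only [Fin.mk_lt_mk]; omega
  · simp only [List.get_eq_getElem, gx, gz]; exact h1
  · simp only [List.get_eq_getElem, gx, gy]; exact h2

lemma idx_to_pat {l : List ℕ} (p q r : Fin l.length) (hpq : p < q) (hqr : q < r)
    (h1 : l.get r < l.get p) (h2 : l.get p < l.get q) : Pat231 l := by
  obtain ⟨p, hp⟩ := p
  obtain ⟨q, hq⟩ := q
  obtain ⟨r, hr⟩ := r
  simp only [Fin.lt_def] at hpq hqr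
  simp only [List.get_eq_getElem] at h1 h2
  have hjlen : q - (p + 1) < (l.drop (p + 1)).length := by simp; omega
  have hklen : r - (q + 1) < (l.drop (q + 1)).length := by simp; omega
  have tq : (l.drop (p + 1))[q - (p + 1)] = l[q] := by
    rw [List.getElem_drop]
    have hjq : p + 1 + (q - (p + 1)) = q := by omega
    simp only [hjq]
  have sk : (l.drop (q + 1))[r - (q + 1)] = l[r] := by
    rw [List.getElem_drop]
    have hkr : q + 1 + (r - (q + 1)) = r := by omega
    simp only [hkr]
  have h5 : (l.drop (p + 1)).drop (q - (p + 1) + 1) = l.drop (q + 1) := by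
    rw [List.drop_drop]
    congr 1
    omega
  have e1 : l.take p ++ l[p] :: l.drop (p + 1) = l := by
    rw [List.getElem_cons_drop, List.take_append_drop]
  have e2 : (l.drop (p + 1)).take (q - (p + 1)) ++ l[q] :: l.drop (q + 1) = l.drop (p + 1) := by
    rw [← tq, ← h5, List.getElem_cons_drop, List.take_append_drop]
  have e3 : (l.drop (q + 1)).take (r - (q + 1)) ++ l[r] :: (l.drop (q + 1)).drop (r - (q + 1) + 1)
      = l.drop (q + 1) := by
    rw [← sk, List.getElem_cons_drop, List.take_append_drop]
  refine ⟨l.take p, (l.drop (p + 1)).take (q - (p + 1)), (l.drop (q + 1)).take (r - (q + 1)),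
    (l.drop (q + 1)).drop (r - (q + 1) + 1), l[p], l[q], l[r], ?_, h1, h2⟩
  rw [show l.take p ++ l[p] :: (l.drop (p + 1)).take (q - (p + 1)) ++
        l[q] :: (l.drop (q + 1)).take (r - (q + 1)) ++
        l[r] :: (l.drop (q + 1)).drop (r - (q + 1) + 1)
      = l.take p ++ l[p] :: ((l.drop (p + 1)).take (q - (p + 1)) ++
        l[q] :: ((l.drop (q + 1)).take (r - (q + 1)) ++
        l[r] :: (l.drop (q + 1)).drop (r - (q + 1) + 1))) by simp,
    e3, e2, e1]

open List in
lemma cons_sublist_decomp {x : ℕ} {t m : List ℕ} (h : x :: t <+ m) :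
    ∃ s r, m = s ++ x :: r ∧ t <+ r := by
  rw [List.cons_sublist_iff] at h
  obtain ⟨r₁, r₂, rfl, hx, htl⟩ := h
  obtain ⟨s, t', rfl⟩ := List.append_of_mem hx
  exact ⟨s, t' ++ r₂, by simp, htl.trans (List.sublist_append_right t' r₂)⟩

open List in
lemma pat_sublist {l m : List ℕ} (h : l <+ m) (hp : Pat231 l) : Pat231 m := by
  obtain ⟨A, B, C, D, x, y, z, rfl, h1, h2⟩ := hp
  have h0 : A ++ (x :: (B ++ (y :: (C ++ (z :: D))))) <+ m := by
    have he : A ++ x :: B ++ y :: C ++ z :: D = A ++ (x :: (B ++ (y :: (C ++ (z :: D))))) := by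
      simp
    rwa [he] at h
  have h3 : x :: (B ++ (y :: (C ++ (z :: D)))) <+ m := (List.sublist_append_right A _).trans h0
  obtain ⟨s1, r1, rfl, hr1⟩ := cons_sublist_decomp h3
  have h4 : y :: (C ++ (z :: D)) <+ r1 := (List.sublist_append_right B _).trans hr1
  obtain ⟨s2, r2, rfl, hr2⟩ := cons_sublist_decomp h4
  have h5 : z :: D <+ r2 := (List.sublist_append_right C _).trans hr2
  obtain ⟨s3, r3, rfl, _⟩ := cons_sublist_decomp h5
  exact ⟨s1, s2, s3, r3, x, y, z, by simp, h1, h2⟩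

lemma dropWhile_head_false {p : ℕ → Bool} : ∀ (l : List ℕ) {w : ℕ} {t : List ℕ},
    l.dropWhile p = w :: t → p w = false := by
  intro l
  induction l with
  | nil => intro w t h; simp [List.dropWhile] at h
  | cons a l ih =>
    intro w t h
    rw [List.dropWhile_cons] at h
    split at h
    · exact ih h
    · next hp =>
      cases h
      simpa using hp

lemma not_cut {γ : ℕ} {G E F : List ℕ} {u w : ℕ} (hG : G ≠ []) (hu : γ < u) (hw : w ≤ γ)
    {μ ν ω : List ℕ} (hμ : μ.length = 1)
    (heq : μ ++ ν ++ ω = G ++ u :: (E ++ w :: F))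
    (hν : ∀ x ∈ ν, x ≤ γ) (hω : ∀ x ∈ ω, γ < x) : False := by
  obtain ⟨e, rfl⟩ := List.length_eq_one_iff.mp hμ
  obtain ⟨g, G', rfl⟩ := List.exists_cons_of_ne_nil hG
  rw [show [e] ++ ν ++ ω = e :: (ν ++ ω) by simp,
    show (g :: G') ++ u :: (E ++ w :: F) = g :: ((G' ++ [u]) ++ (E ++ w :: F)) by simp] at heq
  injection heq with h1 h2
  rcases List.append_eq_append_iff.mp h2 with ⟨a', _, hb⟩ | ⟨c', hc, _⟩
  · exact absurd (hω w (by rw [hb]; simp)) (not_lt.mpr hw)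
  · exact absurd (hν u (by rw [hc]; simp)) (not_le.mpr hu)

-- monotonicity facts about the relabeling map
lemma fmono (L : Finset ℕ) {u v : ℕ} (h : u ≤ v) :
    (L.filter fun y => y ≤ u).card ≤ (L.filter fun y => y ≤ v).card :=
  Finset.card_le_card (Finset.monotone_filter_right L fun y _ hy => le_trans hy h)

lemma fstrict (L : Finset ℕ) {u v : ℕ} (hv : v ∈ L) (h : u < v) :
    (L.filter fun y => y ≤ u).card < (L.filter fun y => y ≤ v).card := by
  apply Finset.card_lt_card
  refine ⟨Finset.monotone_filter_right L fun y _ hy => le_trans hy h.le, ?_⟩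
  intro hsub
  have := hsub (Finset.mem_filter.mpr ⟨hv, le_rfl⟩)
  rw [Finset.mem_filter] at this
  omega

lemma fpos (L : Finset ℕ) {u : ℕ} (hu : u ∈ L) :
    1 ≤ (L.filter fun y => y ≤ u).card :=
  Finset.card_pos.mpr ⟨u, Finset.mem_filter.mpr ⟨hu, le_rfl⟩⟩

lemma fle (L : Finset ℕ) (u : ℕ) : (L.filter fun y => y ≤ u).card ≤ L.card :=
  Finset.card_le_card (Finset.filter_subset _ _)

lemma feqcard (L : Finset ℕ) {u b : ℕ} (hb : b ∈ L)
    (h : L.card ≤ (L.filter fun y => y ≤ u).card) : b ≤ u := by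
  have heq := Finset.eq_of_subset_of_card_le (Finset.filter_subset (fun y => y ≤ u) L) h
  have hb2 : b ∈ L.filter fun y => y ≤ u := by rw [heq]; exact hb
  exact (Finset.mem_filter.mp hb2).2

theorem fullyOneRootedCuttable_iff_avoids_231 (n : ℕ) (hn : 1 ≤ n)
    (σ : List ℕ) (hσ : IsMultiPerm 1 n σ) :
    FullyKRootedCuttable 1 n σ ↔
      ¬ ∃ p q r : Fin σ.length, p < q ∧ q < r ∧
          σ.get r < σ.get p ∧ σ.get p < σ.get q := by
  have hmem : ∀ v ∈ σ, 1 ≤ v ∧ v ≤ n := by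
    intro v hv
    have h := hσ v
    by_contra hc
    rw [if_neg hc] at h
    have := List.count_pos_iff.mpr hv
    omega
  have hcount1 : ∀ v : ℕ, σ.count v ≤ 1 := by
    intro v
    rw [hσ v]
    split <;> omega
  constructor
  · -- fully cuttable → avoids 231
    intro hfull
    rintro ⟨p, q, r, hpq, hqr, h1, h2⟩
    obtain ⟨A, B, C, D, x, y, z, hl, hzx, hxy⟩ := idx_to_pat p q r hpq hqr h1 h2
    have hzσ : z ∈ σ := by rw [hl]; simp
    have hyσ : y ∈ σ := by rw [hl]; simp
    set L := Finset.Icc z y with hL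
    obtain ⟨γ, hγ1, hγ2, μ, ν, ω, heq, hμ, hν, hω⟩ :=
      hfull z y (hmem z hzσ).1 (lt_trans hzx hxy) (hmem y hyσ).2
    rw [← hL] at hγ2 heq
    set Pd : ℕ → Bool := fun v => decide (v ∈ L) with hPd
    set f : ℕ → ℕ := fun v => (L.filter fun w => w ≤ v).card with hf
    have hPx : Pd x = true := by simp [hPd, hL, Finset.mem_Icc]; omega
    have hPy : Pd y = true := by simp [hPd, hL, Finset.mem_Icc]; omega
    have hPz : Pd z = true := by simp [hPd, hL, Finset.mem_Icc]; omega
    have key : restrict σ L = ((A.filter Pd).map f ++ f x :: (B.filter Pd).map f)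
        ++ f y :: ((C.filter Pd).map f ++ f z :: (D.filter Pd).map f) := by
      show (σ.filter Pd).map f = _
      rw [hl]
      simp [List.filter_append, List.filter_cons, hPx, hPy, hPz]
    have hcard : L.card = y + 1 - z := by rw [hL, Nat.card_Icc]
    have hfy : f y = L.card := by
      show (L.filter fun w => w ≤ y).card = L.card
      rw [Finset.filter_true_of_mem]
      intro w hw
      rw [hL, Finset.mem_Icc] at hw
      exact hw.2
    have hfz : f z ≤ 1 := by
      show (L.filter fun w => w ≤ z).card ≤ 1
      calc (L.filter fun w => w ≤ z).card ≤ ({z} : Finset ℕ).card := by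
            apply Finset.card_le_card
            intro w hw
            rw [Finset.mem_filter, hL, Finset.mem_Icc] at hw
            simp only [Finset.mem_singleton]
            omega
        _ = 1 := Finset.card_singleton z
    have hu : γ < f y := by rw [hfy]; omega
    have hw : f z ≤ γ := by omega
    exact not_cut (by simp) hu hw hμ (heq.symm.trans key) hν hω
  · -- avoids 231 → fully cuttable
    intro hno a b ha hab hb
    set L := Finset.Icc a b with hL
    set Pd : ℕ → Bool := fun v => decide (v ∈ L) with hPd
    set f : ℕ → ℕ := fun v => (L.filter fun w => w ≤ v).card with hf
    set F := σ.filter Pd with hF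
    have hbσ : b ∈ σ := by
      apply List.count_pos_iff.mp
      rw [hσ b, if_pos ⟨by omega, hb⟩]
      omega
    have hbF : b ∈ F := by
      rw [hF, List.mem_filter]
      exact ⟨hbσ, by simp [hPd, hL, Finset.mem_Icc]; omega⟩
    obtain ⟨x, F', hF'⟩ := List.exists_cons_of_ne_nil (List.ne_nil_of_mem hbF)
    have memL : ∀ u ∈ F, u ∈ L := by
      intro u hu
      rw [hF, List.mem_filter] at hu
      simpa [hPd] using hu.2
    have hxL : x ∈ L := memL x (by rw [hF']; simp)
    have hcardL : L.card = b + 1 - a := by rw [hL, Nat.card_Icc]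
    have hcountF : ∀ v : ℕ, F.count v ≤ 1 := by
      intro v
      exact le_trans ((List.filter_sublist : List.Sublist (σ.filter Pd) σ).count_le v) (hcount1 v)
    have hne : ∀ u ∈ F', u ≠ x := by
      intro u hu he
      have h2 : 2 ≤ F.count x := by
        rw [hF', List.count_cons_self]
        have : x ∈ F' := he ▸ hu
        have := List.count_pos_iff.mpr this
        omega
      have := hcountF x
      omega
    have hres : restrict σ L = f x :: F'.map f := by
      show (σ.filter Pd).map f = _
      rw [← hF, hF']
      simp
    have hfle : ∀ u, f u ≤ L.card := fun u => fle L u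
    by_cases hxm : f x = L.card
    · -- first letter is the maximum: cut at L.card - 1
      refine ⟨L.card - 1, by omega, le_rfl, [f x], F'.map f, [], ?_, rfl, ?_, by simp⟩
      · rw [hres]; simp
      · intro e he
        obtain ⟨u, hu, rfl⟩ := List.mem_map.mp he
        have huF : u ∈ F := by rw [hF']; exact List.mem_cons_of_mem _ hu
        have huL : u ∈ L := memL u huF
        have hub : u ≤ b := by
          have := huL
          rw [hL, Finset.mem_Icc] at this
          exact this.2
        have h3 : f u ≤ L.card := hfle u
        rcases eq_or_lt_of_le h3 with he2 | he2
        · exfalso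
          have hbu : b ≤ u := feqcard L (by rw [hL, Finset.mem_Icc]; omega) (le_of_eq he2.symm)
          have hbx : b ≤ x := feqcard L (by rw [hL, Finset.mem_Icc]; omega) (le_of_eq hxm.symm)
          have hxb : x ≤ b := by
            have := hxL
            rw [hL, Finset.mem_Icc] at this
            exact this.2
          exact hne u hu (by omega)
        · omega
    · -- cut at γ = f x
      have hfx1 : 1 ≤ f x := fpos L hxL
      have hfxle : f x ≤ L.card := hfle x
      have hfxlt : f x < L.card := lt_of_le_of_ne hfxle hxm
      refine ⟨f x, hfx1, by omega, [f x],
        (F'.map f).takeWhile (fun e => decide (e ≤ f x)),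
        (F'.map f).dropWhile (fun e => decide (e ≤ f x)), ?_, rfl, ?_, ?_⟩
      · rw [hres]
        simp [List.takeWhile_append_dropWhile]
      · intro e he
        have := List.mem_takeWhile_imp he
        simpa using this
      · intro e he
        by_contra hc
        push_neg at hc
        have hωne : (F'.map f).dropWhile (fun e => decide (e ≤ f x)) ≠ [] :=
          List.ne_nil_of_mem he
        obtain ⟨w, ω', hω'⟩ := List.exists_cons_of_ne_nil hωne
        have hwγ : ¬ (w ≤ f x) := by
          have h0 := dropWhile_head_false (F'.map f) hω'
          simpa using h0
        rw [hω'] at he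
        rcases List.mem_cons.mp he with rfl | heω'
        · exact hwγ hc
        obtain ⟨E1, E2, hE⟩ := List.append_of_mem heω'
        have hdecomp : F'.map f
            = (F'.map f).takeWhile (fun e => decide (e ≤ f x)) ++ w :: (E1 ++ e :: E2) := by
          conv_lhs => rw [← (List.takeWhile_append_dropWhile : (F'.map f).takeWhile (fun e => decide (e ≤ f x)) ++ (F'.map f).dropWhile (fun e => decide (e ≤ f x)) = F'.map f)]
          rw [hω', hE]
        obtain ⟨l₁, l₂, hsplit, hm1, hm2⟩ := List.map_eq_append_iff.mp hdecomp
        obtain ⟨u, l₃, hl₂, hfu, hm3⟩ := List.map_eq_cons_iff.mp hm2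
        obtain ⟨l₄, l₅, hsplit2, hm4, hm5⟩ := List.map_eq_append_iff.mp hm3
        obtain ⟨v, l₆, hl₅, hfv, _⟩ := List.map_eq_cons_iff.mp hm5
        have hF'eq : F' = l₁ ++ u :: (l₄ ++ v :: l₆) := by
          rw [hsplit, hl₂, hsplit2, hl₅]
        have huF : u ∈ F := by rw [hF', hF'eq]; simp
        have hvF : v ∈ F := by rw [hF', hF'eq]; simp
        have huL : u ∈ L := memL u huF
        have hvL : v ∈ L := memL v hvF
        have huF' : u ∈ F' := by rw [hF'eq]; simp
        have hvF' : v ∈ F' := by rw [hF'eq]; simp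
        have hvx : v < x := by
          rcases lt_trichotomy v x with h | h | h
          · exact h
          · exact absurd h (hne v hvF')
          · exfalso
            have h3 : f x < f v := fstrict L hvL h
            rw [hfv] at h3
            omega
        have hxu : x < u := by
          by_contra h
          push_neg at h
          have h3 : f u ≤ f x := fmono L h
          rw [hfu] at h3
          omega
        have hpatF : Pat231 F := by
          refine ⟨[], l₁, l₄, l₆, x, u, v, ?_, hvx, hxu⟩
          rw [hF', hF'eq]
          simp
        have hpatσ : Pat231 σ := pat_sublist (by rw [hF]; exact List.filter_sublist) hpatF
        exact hno (pat_to_idx hpatσ)
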